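/- For all integers a, b, c, d with ad − bc = 1 and 3 ∣ c, and every z ∈ ℂ with Im z > 0: Θ_K((az+b)/(cz+d)) = χ₃(d) · (cz+d) · Θ_K(z). (That is, Θ_K is a modular form of weight 1 for Γ₀(3) with character χ₃; in particular it is modular of weight 1 for Γ₁(3).) -/

import Mathlib

open Complex

/-- The theta function of `ℚ(√−3)`:
`Θ_K(z) = ∑_{(m,n) ∈ ℤ×ℤ} exp(2πi(m² + n² − mn)z)`. -/
noncomputable def ThetaK (z : ℂ) : ℂ :=
  ∑' p : ℤ × ℤ, Complex.exp (2 * Real.pi * Complex.I *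
    ((p.1 : ℂ) ^ 2 + (p.2 : ℂ) ^ 2 - (p.1 : ℂ) * (p.2 : ℂ)) * z)

/-- The nontrivial character modulo 3. -/
def chi3 (d : ℤ) : ℤ :=
  if d % 3 = 1 then 1 else if d % 3 = 2 then -1 else 0

namespace ThetaKAux

lemma norm_cexp_mul (r : ℝ) (z : ℂ) :
    ‖Complex.exp (2 * Real.pi * I * (r : ℂ) * z)‖ = Real.exp (-(2 * Real.pi * r * z.im)) := by
  rw [Complex.norm_exp]
  congr 1
  have h : (2 * Real.pi * I * (r : ℂ) * z) = ((2 * Real.pi * r : ℝ) : ℂ) * z * I := by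
    push_cast; ring
  rw [h, mul_I_re, im_ofReal_mul]

lemma norm_cexp_pi (r : ℝ) (τ : ℂ) :
    ‖Complex.exp ((Real.pi : ℂ) * I * (r : ℂ) * τ)‖ = Real.exp (-(Real.pi * r * τ.im)) := by
  rw [Complex.norm_exp]
  congr 1
  have h : ((Real.pi : ℂ) * I * (r : ℂ) * τ) = ((Real.pi * r : ℝ) : ℂ) * τ * I := by
    push_cast; ring
  rw [h, mul_I_re, im_ofReal_mul]

lemma summable_exp_sq {T : ℝ} (hT : 0 < T) :
    Summable (fun n : ℤ => Real.exp (-(Real.pi * T * (n : ℝ) ^ 2))) := by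
  have := summable_pow_mul_jacobiTheta₂_term_bound 0 hT 0
  refine this.congr fun n => ?_
  norm_num [mul_assoc]

set_option maxHeartbeats 1000000 in
lemma summable_thetaK {z : ℂ} (hz : 0 < z.im) :
    Summable (fun p : ℤ × ℤ => Complex.exp (2 * Real.pi * Complex.I *
      ((p.1 : ℂ) ^ 2 + (p.2 : ℂ) ^ 2 - (p.1 : ℂ) * (p.2 : ℂ)) * z)) := by
  have h1 : Summable (fun p : ℤ × ℤ =>
      Real.exp (-(Real.pi * z.im * (p.1 : ℝ) ^ 2)) * Real.exp (-(Real.pi * z.im * (p.2 : ℝ) ^ 2))) :=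
    (summable_exp_sq (by positivity)).mul_of_nonneg (summable_exp_sq (by positivity))
      (fun _ => (Real.exp_pos _).le) (fun _ => (Real.exp_pos _).le)
  refine Summable.of_norm_bounded h1 fun p => ?_
  have hc : ((p.1 : ℂ) ^ 2 + (p.2 : ℂ) ^ 2 - (p.1 : ℂ) * (p.2 : ℂ))
      = (((p.1 : ℝ) ^ 2 + (p.2 : ℝ) ^ 2 - (p.1 : ℝ) * (p.2 : ℝ) : ℝ) : ℂ) := by push_cast; ring
  rw [hc, norm_cexp_mul, ← Real.exp_add, Real.exp_le_exp]
  nlinarith [mul_nonneg (mul_nonneg Real.pi_pos.le hz.le) (sq_nonneg ((p.1 : ℝ) - (p.2 : ℝ)))]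

lemma thetaK_eq_tsum (z : ℂ) (hz : 0 < z.im) :
    ThetaK z = ∑' n : ℤ, Complex.exp (2 * Real.pi * I * (n : ℂ) ^ 2 * z)
      * jacobiTheta₂ (-(n : ℂ) * z) (2 * z) := by
  rw [ThetaK, (summable_thetaK hz).tsum_prod]
  refine tsum_congr fun n => ?_
  rw [jacobiTheta₂, ← tsum_mul_left]
  refine tsum_congr fun m => ?_
  rw [jacobiTheta₂_term, ← Complex.exp_add]
  congr 1
  push_cast
  ring

lemma thetaK_add_int (z : ℂ) (n : ℤ) : ThetaK (z + n) = ThetaK z := by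
  unfold ThetaK
  refine tsum_congr fun p => ?_
  have h : 2 * Real.pi * I * ((p.1 : ℂ) ^ 2 + (p.2 : ℂ) ^ 2 - p.1 * p.2) * (z + n)
      = 2 * Real.pi * I * ((p.1 : ℂ) ^ 2 + (p.2 : ℂ) ^ 2 - p.1 * p.2) * z
        + ((p.1 ^ 2 + p.2 ^ 2 - p.1 * p.2) * n : ℤ) * (2 * Real.pi * I) := by push_cast; ring
  rw [h, Complex.exp_add, Complex.exp_int_mul_two_pi_mul_I, mul_one]

lemma ofReal_mul_cpow {r : ℝ} (hr : 0 < r) {x : ℂ} (hx : x ≠ 0) (s : ℂ) :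
    ((r : ℂ) * x) ^ s = (r : ℂ) ^ s * x ^ s := by
  have hr' : (r : ℂ) ≠ 0 := ofReal_ne_zero.mpr hr.ne'
  rw [cpow_def_of_ne_zero (mul_ne_zero hr' hx), cpow_def_of_ne_zero hr',
    cpow_def_of_ne_zero hx, log_ofReal_mul hr hx, ← Complex.exp_add,
    ← Complex.ofReal_log hr.le]
  congr 1
  ring

lemma cpow_half_mul_self {x : ℂ} (hx : x ≠ 0) : x ^ (1/2 : ℂ) * x ^ (1/2 : ℂ) = x := by
  rw [← cpow_add _ _ hx]
  norm_num

set_option maxHeartbeats 1000000 in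
lemma swap_lemma {z w : ℂ} (hz : 0 < z.im) (hw : 0 < w.im) :
    ∑' n : ℤ, Complex.exp ((Real.pi : ℂ) * I * ((n : ℂ) ^ 2) * (3 * w / 2))
        * jacobiTheta₂ (-(n : ℂ) / 2) (3 * z / 2)
      = ∑' m : ℤ, Complex.exp ((Real.pi : ℂ) * I * ((m : ℂ) ^ 2) * (3 * z / 2))
        * jacobiTheta₂ (-(m : ℂ) / 2) (3 * w / 2) := by
  have hsum : Summable (Function.uncurry fun (n m : ℤ) =>
      Complex.exp ((Real.pi : ℂ) * I * ((n : ℂ) ^ 2) * (3 * w / 2))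
        * jacobiTheta₂_term m (-(n : ℂ) / 2) (3 * z / 2)) := by
    apply Summable.of_norm
    have hg : Summable (fun p : ℤ × ℤ =>
        Real.exp (-(Real.pi * (3 * w.im / 2) * (p.1 : ℝ) ^ 2))
          * Real.exp (-(Real.pi * (3 * z.im / 2) * (p.2 : ℝ) ^ 2))) :=
      (summable_exp_sq (by linarith)).mul_of_nonneg (summable_exp_sq (by linarith))
        (fun _ => (Real.exp_pos _).le) (fun _ => (Real.exp_pos _).le)
    refine hg.congr fun p => ?_
    rw [Function.uncurry]
    rw [norm_mul, norm_jacobiTheta₂_term]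
    have h1 : ‖Complex.exp ((Real.pi : ℂ) * I * ((p.1 : ℂ) ^ 2) * (3 * w / 2))‖
        = Real.exp (-(Real.pi * (3 * w.im / 2) * (p.1 : ℝ) ^ 2)) := by
      have hh := norm_cexp_pi ((p.1 : ℝ) ^ 2) (3 * w / 2)
      rw [show (((p.1 : ℝ) ^ 2 : ℝ) : ℂ) = ((p.1 : ℂ) ^ 2) by push_cast; ring] at hh
      rw [hh]
      congr 1
      have h2 : (3 * w / 2).im = 3 * w.im / 2 := by
        simp [Complex.div_im, Complex.mul_im]
      rw [h2]; ring
    rw [h1]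
    congr 1
    have him : (-(p.1 : ℂ) / 2).im = 0 := by
      simp [Complex.div_im]
    have him2 : (3 * z / 2).im = 3 * z.im / 2 := by
      simp [Complex.div_im, Complex.mul_im]
    rw [him, him2]
    ring
  calc ∑' n : ℤ, Complex.exp ((Real.pi : ℂ) * I * ((n : ℂ) ^ 2) * (3 * w / 2))
        * jacobiTheta₂ (-(n : ℂ) / 2) (3 * z / 2)
      = ∑' (n : ℤ) (m : ℤ), Complex.exp ((Real.pi : ℂ) * I * ((n : ℂ) ^ 2) * (3 * w / 2))
        * jacobiTheta₂_term m (-(n : ℂ) / 2) (3 * z / 2) := by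
        exact tsum_congr fun n => by rw [jacobiTheta₂, ← tsum_mul_left]
    _ = ∑' (m : ℤ) (n : ℤ), Complex.exp ((Real.pi : ℂ) * I * ((n : ℂ) ^ 2) * (3 * w / 2))
        * jacobiTheta₂_term m (-(n : ℂ) / 2) (3 * z / 2) := by
        exact (Summable.tsum_comm (f := fun (n m : ℤ) =>
          Complex.exp ((Real.pi : ℂ) * I * ((n : ℂ) ^ 2) * (3 * w / 2))
            * jacobiTheta₂_term m (-(n : ℂ) / 2) (3 * z / 2)) hsum).symm
    _ = ∑' m : ℤ, Complex.exp ((Real.pi : ℂ) * I * ((m : ℂ) ^ 2) * (3 * z / 2))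
        * jacobiTheta₂ (-(m : ℂ) / 2) (3 * w / 2) := by
        refine tsum_congr fun m => ?_
        rw [jacobiTheta₂, ← tsum_mul_left]
        refine tsum_congr fun n => ?_
        rw [jacobiTheta₂_term, jacobiTheta₂_term, ← Complex.exp_add, ← Complex.exp_add]
        congr 1
        ring

set_option maxHeartbeats 1000000 in
lemma thetaK_fricke' {z w : ℂ} (hz : 0 < z.im) (hw_def : w = -1 / (3 * z)) :
    ThetaK w = -I * (Real.sqrt 3 : ℂ) * z * ThetaK z := by
  have hz0 : z ≠ 0 := fun h => by simp [h] at hz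
  have hw0 : w ≠ 0 := by
    rw [hw_def]
    simp [hz0]
  have hwz : 3 * w * z = -1 := by
    rw [hw_def]; field_simp
  have hw : 0 < w.im := by
    have h1 : w = -(3*z)⁻¹ := by rw [hw_def]; ring
    have h3 : (3*z) ≠ 0 := by simp [hz0]
    rw [h1, neg_im, inv_im, neg_div, neg_neg]
    apply div_pos
    · simp; linarith
    · exact normSq_pos.mpr h3
  obtain ⟨A, hA_def⟩ : ∃ A : ℂ, A = (-I * (2 * w)) ^ (1/2 : ℂ) := ⟨_, rfl⟩
  obtain ⟨B, hB_def⟩ : ∃ B : ℂ, B = (-I * (3 * w / 2)) ^ (1/2 : ℂ) := ⟨_, rfl⟩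
  have h2w : (2 * w : ℂ) ≠ 0 := by simp [hw0]
  have h3w2 : (3 * w / 2 : ℂ) ≠ 0 := by simp [hw0]
  have step2 : ∀ n : ℤ, Complex.exp (2 * Real.pi * I * (n : ℂ) ^ 2 * w)
      * jacobiTheta₂ (-(n : ℂ) * w) (2 * w)
      = (1 / A) * (Complex.exp ((Real.pi : ℂ) * I * ((n : ℂ) ^ 2) * (3 * w / 2))
          * jacobiTheta₂ (-(n : ℂ) / 2) (3 * z / 2)) := by
    intro n
    have hd1 : (-(n : ℂ) * w) / (2 * w) = -(n : ℂ) / 2 := by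
      field_simp
    have hd2 : (-1 : ℂ) / (2 * w) = 3 * z / 2 := by
      rw [div_eq_div_iff h2w two_ne_zero]
      linear_combination (-2 : ℂ) * hwz
    have hexp : Complex.exp (2 * Real.pi * I * (n : ℂ) ^ 2 * w)
        * Complex.exp (-(Real.pi : ℂ) * I * (-(n : ℂ) * w) ^ 2 / (2 * w))
        = Complex.exp ((Real.pi : ℂ) * I * ((n : ℂ) ^ 2) * (3 * w / 2)) := by
      rw [← Complex.exp_add]
      congr 1
      field_simp
      ring
    rw [jacobiTheta₂_functional_equation (-(n : ℂ) * w) (2 * w), hd1, hd2, ← hA_def]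
    linear_combination (1 / A * jacobiTheta₂ (-(n : ℂ) / 2) (3 * z / 2)) * hexp
  have step4 : ∀ m : ℤ, Complex.exp ((Real.pi : ℂ) * I * ((m : ℂ) ^ 2) * (3 * z / 2))
      * jacobiTheta₂ (-(m : ℂ) / 2) (3 * w / 2)
      = (1 / B) * (Complex.exp (2 * Real.pi * I * (m : ℂ) ^ 2 * z)
          * jacobiTheta₂ (-(m : ℂ) * z) (2 * z)) := by
    intro m
    have hd1 : (-(m : ℂ) / 2) / (3 * w / 2) = (m : ℂ) * z := by
      rw [div_eq_iff h3w2]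
      linear_combination (-(m : ℂ) / 2) * hwz
    have hd2 : (-1 : ℂ) / (3 * w / 2) = 2 * z := by
      rw [div_eq_iff h3w2]
      linear_combination -hwz
    have hexp : Complex.exp ((Real.pi : ℂ) * I * ((m : ℂ) ^ 2) * (3 * z / 2))
        * Complex.exp (-(Real.pi : ℂ) * I * (-(m : ℂ) / 2) ^ 2 / (3 * w / 2))
        = Complex.exp (2 * Real.pi * I * (m : ℂ) ^ 2 * z) := by
      rw [← Complex.exp_add]
      congr 1
      rw [hw_def]
      field_simp
      ring
    have hneg : jacobiTheta₂ ((m : ℂ) * z) (2 * z) = jacobiTheta₂ (-(m : ℂ) * z) (2 * z) := by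
      rw [show -(m : ℂ) * z = -((m : ℂ) * z) by ring, jacobiTheta₂_neg_left]
    rw [jacobiTheta₂_functional_equation (-(m : ℂ) / 2) (3 * w / 2), hd1, hd2, hneg, ← hB_def]
    linear_combination (1 / B * jacobiTheta₂ (-(m : ℂ) * z) (2 * z)) * hexp
  have key : ThetaK w = (1 / A) * ((1 / B) * ThetaK z) := by
    rw [thetaK_eq_tsum w hw]
    rw [tsum_congr step2, tsum_mul_left, swap_lemma hz hw, tsum_congr step4, tsum_mul_left]
    rw [← thetaK_eq_tsum z hz]
  rw [key]
  have hu0 : (I / z : ℂ) ≠ 0 := div_ne_zero I_ne_zero hz0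
  have hA2 : A = ((2/3 : ℝ) : ℂ) ^ (1/2 : ℂ) * (I / z) ^ (1/2 : ℂ) := by
    rw [hA_def, show -I * (2 * w) = ((2/3 : ℝ) : ℂ) * (I / z) by
      rw [hw_def]; field_simp; push_cast; ring]
    exact ofReal_mul_cpow (by norm_num) hu0 _
  have hB2 : B = ((1/2 : ℝ) : ℂ) ^ (1/2 : ℂ) * (I / z) ^ (1/2 : ℂ) := by
    rw [hB_def, show -I * (3 * w / 2) = ((1/2 : ℝ) : ℂ) * (I / z) by
      rw [hw_def]; field_simp; push_cast; ring]
    exact ofReal_mul_cpow (by norm_num) hu0 _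
  have hAB : A * B = (((Real.sqrt 3)⁻¹ : ℝ) : ℂ) * (I / z) := by
    rw [hA2, hB2]
    have h1 : ((2/3 : ℝ) : ℂ) ^ (1/2 : ℂ) * ((1/2 : ℝ) : ℂ) ^ (1/2 : ℂ)
        = (((Real.sqrt 3)⁻¹ : ℝ) : ℂ) := by
      rw [show ((1/2 : ℂ)) = (((1/2 : ℝ) : ℝ) : ℂ) by norm_num]
      rw [← Complex.ofReal_cpow (by norm_num) (1/2 : ℝ),
        ← Complex.ofReal_cpow (by norm_num) (1/2 : ℝ), ← Complex.ofReal_mul]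
      congr 1
      rw [← Real.mul_rpow (by norm_num) (by norm_num)]
      rw [show (2/3 : ℝ) * (1/2 : ℝ) = 3⁻¹ by norm_num]
      rw [← Real.sqrt_eq_rpow, Real.sqrt_inv]
    calc ((2/3 : ℝ) : ℂ) ^ (1/2 : ℂ) * (I / z) ^ (1/2 : ℂ)
          * (((1/2 : ℝ) : ℂ) ^ (1/2 : ℂ) * (I / z) ^ (1/2 : ℂ))
        = (((2/3 : ℝ) : ℂ) ^ (1/2 : ℂ) * ((1/2 : ℝ) : ℂ) ^ (1/2 : ℂ))
          * ((I / z) ^ (1/2 : ℂ) * (I / z) ^ (1/2 : ℂ)) := by ring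
      _ = (((Real.sqrt 3)⁻¹ : ℝ) : ℂ) * (I / z) := by
          rw [h1, cpow_half_mul_self hu0]
  have hsqrt3 : (Real.sqrt 3 : ℝ) ≠ 0 := by positivity
  have hfin : (1 / A) * (1 / B) = -I * (Real.sqrt 3 : ℂ) * z := by
    rw [div_mul_div_comm, one_mul, hAB, one_div,
      show (((Real.sqrt 3)⁻¹ : ℝ) : ℂ) = ((Real.sqrt 3 : ℝ) : ℂ)⁻¹ by push_cast; ring,
      mul_inv, inv_inv, inv_div, div_eq_mul_inv, inv_I]
    ring
  rw [← mul_assoc, hfin]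

lemma thetaK_fricke {z : ℂ} (hz : 0 < z.im) :
    ThetaK (-1 / (3 * z)) = -I * (Real.sqrt 3 : ℂ) * z * ThetaK z :=
  thetaK_fricke' hz rfl

def MEq (a b c d : ℤ) : Prop := ∀ z : ℂ, 0 < z.im →
  ThetaK (((a : ℂ) * z + (b : ℂ)) / ((c : ℂ) * z + (d : ℂ)))
    = (chi3 d : ℂ) * ((c : ℂ) * z + (d : ℂ)) * ThetaK z

lemma chi3_add_three_mul (d e : ℤ) : chi3 (d + 3 * e) = chi3 d := by
  unfold chi3
  rw [Int.add_mul_emod_self_left]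

lemma denom_ne_zero {c d : ℤ} (h : ¬(c = 0 ∧ d = 0)) {z : ℂ} (hz : 0 < z.im) :
    (c : ℂ) * z + (d : ℂ) ≠ 0 := by
  rcases eq_or_ne c 0 with hc | hc
  · subst hc
    have hd : d ≠ 0 := fun hd => h ⟨rfl, hd⟩
    simp [hd]
  · intro hzero
    have him : ((c : ℂ) * z + (d : ℂ)).im = (c : ℝ) * z.im := by
      simp
    rw [hzero, Complex.zero_im] at him
    have hc' : (c : ℝ) ≠ 0 := Int.cast_ne_zero.mpr hc
    have : (c : ℝ) * z.im ≠ 0 := mul_ne_zero hc' hz.ne'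
    exact this him.symm

lemma im_mobius {a b c d : ℤ} (hdet : a * d - b * c = 1) {z : ℂ} (hz : 0 < z.im)
    (hden : (c : ℂ) * z + (d : ℂ) ≠ 0) :
    0 < (((a : ℂ) * z + (b : ℂ)) / ((c : ℂ) * z + (d : ℂ))).im := by
  have hns : Complex.normSq ((c : ℂ) * z + (d : ℂ)) ≠ 0 := by
    simpa using hden
  have h : (((a : ℂ) * z + (b : ℂ)) / ((c : ℂ) * z + (d : ℂ))).im
      = z.im / Complex.normSq ((c : ℂ) * z + (d : ℂ)) := by
    rw [Complex.div_im]
    have h1 : ((a : ℂ) * z + (b : ℂ)).im = (a : ℝ) * z.im := by simp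
    have h2 : ((a : ℂ) * z + (b : ℂ)).re = (a : ℝ) * z.re + (b : ℝ) := by simp
    have h3 : ((c : ℂ) * z + (d : ℂ)).im = (c : ℝ) * z.im := by simp
    have h4 : ((c : ℂ) * z + (d : ℂ)).re = (c : ℝ) * z.re + (d : ℝ) := by simp
    rw [h1, h2, h3, h4]
    have hdet' : (a : ℝ) * d - b * c = 1 := by exact_mod_cast hdet
    field_simp
    linear_combination hdet'
  rw [h]
  exact div_pos hz ((Complex.normSq_pos).mpr hden)

lemma MEq_T (a b c d k : ℤ) (hc3 : 3 ∣ c) (h : MEq a b c d) :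
    MEq a (a * k + b) c (c * k + d) := by
  intro z hz
  have hz' : 0 < (z + (k : ℂ)).im := by simpa using hz
  have h1 := h (z + (k : ℂ)) hz'
  rw [thetaK_add_int z k] at h1
  have harg : ((a : ℂ) * (z + (k : ℂ)) + (b : ℂ)) / ((c : ℂ) * (z + (k : ℂ)) + (d : ℂ))
      = ((a : ℂ) * z + ((a * k + b : ℤ) : ℂ)) / ((c : ℂ) * z + ((c * k + d : ℤ) : ℂ)) := by
    push_cast; ring
  have hden : (c : ℂ) * (z + (k : ℂ)) + (d : ℂ) = (c : ℂ) * z + ((c * k + d : ℤ) : ℂ) := by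
    push_cast; ring
  rw [harg, hden] at h1
  obtain ⟨c₀, rfl⟩ := hc3
  have hchi : chi3 (3 * c₀ * k + d) = chi3 d := by
    rw [show 3 * c₀ * k + d = d + 3 * (c₀ * k) by ring, chi3_add_three_mul]
  rw [h1, hchi]

lemma im_neg_inv_three {z : ℂ} (hz : 0 < z.im) : 0 < (-1 / (3 * z)).im := by
  have hz0 : z ≠ 0 := fun h => by simp [h] at hz
  have h1 : (-1 / (3 * z) : ℂ) = -(3 * z)⁻¹ := by ring
  have h3 : (3 * z : ℂ) ≠ 0 := by simp [hz0]
  rw [h1, neg_im, inv_im, neg_div, neg_neg]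
  apply div_pos
  · simp; linarith
  · exact normSq_pos.mpr h3

lemma thetaK_Vm (m : ℤ) {z : ℂ} (hz : 0 < z.im) (hden : 3 * (m : ℂ) * z + 1 ≠ 0) :
    ThetaK (z / (3 * (m : ℂ) * z + 1)) = (3 * (m : ℂ) * z + 1) * ThetaK z := by
  have hz0 : z ≠ 0 := fun h => by simp [h] at hz
  have hu1 : 0 < (-1 / (3 * z) : ℂ).im := im_neg_inv_three hz
  have hu2im : 0 < (-1 / (3 * z) + ((-m : ℤ) : ℂ) : ℂ).im := by simpa using hu1
  have hu2ne : (-1 / (3 * z) + ((-m : ℤ) : ℂ) : ℂ) ≠ 0 :=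
    fun h => by rw [h] at hu2im; simp at hu2im
  have hval : -1 / (3 * (-1 / (3 * z) + ((-m : ℤ) : ℂ))) = z / (3 * (m : ℂ) * z + 1) := by
    rw [div_eq_div_iff (by simpa using hu2ne) hden]
    push_cast
    field_simp
    ring
  have h33 : ((Real.sqrt 3 : ℝ) : ℂ) * ((Real.sqrt 3 : ℝ) : ℂ) = 3 := by
    rw [← Complex.ofReal_mul, Real.mul_self_sqrt (by norm_num)]
    norm_num
  calc ThetaK (z / (3 * (m : ℂ) * z + 1))
      = ThetaK (-1 / (3 * (-1 / (3 * z) + ((-m : ℤ) : ℂ)))) := by rw [hval]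
    _ = -I * (Real.sqrt 3 : ℂ) * (-1 / (3 * z) + ((-m : ℤ) : ℂ))
        * ThetaK (-1 / (3 * z) + ((-m : ℤ) : ℂ)) := thetaK_fricke hu2im
    _ = -I * (Real.sqrt 3 : ℂ) * (-1 / (3 * z) + ((-m : ℤ) : ℂ))
        * ThetaK (-1 / (3 * z)) := by rw [thetaK_add_int]
    _ = -I * (Real.sqrt 3 : ℂ) * (-1 / (3 * z) + ((-m : ℤ) : ℂ))
        * (-I * (Real.sqrt 3 : ℂ) * z * ThetaK z) := by rw [thetaK_fricke hz]
    _ = (3 * (m : ℂ) * z + 1) * ThetaK z := by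
        have hI : (I : ℂ) * I = -1 := I_mul_I
        have huz : (-1 / (3 * z) + ((-m : ℤ) : ℂ)) * z = -(1 : ℂ) / 3 - (m : ℂ) * z := by
          push_cast
          field_simp
          ring
        have hexp : -I * (Real.sqrt 3 : ℂ) * (-1 / (3 * z) + ((-m : ℤ) : ℂ))
            * (-I * (Real.sqrt 3 : ℂ) * z) = 3 * (m : ℂ) * z + 1 := by
          calc -I * (Real.sqrt 3 : ℂ) * (-1 / (3 * z) + ((-m : ℤ) : ℂ))
              * (-I * (Real.sqrt 3 : ℂ) * z)
              = (I * I) * (((Real.sqrt 3 : ℝ) : ℂ) * ((Real.sqrt 3 : ℝ) : ℂ))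
                * ((-1 / (3 * z) + ((-m : ℤ) : ℂ)) * z) := by push_cast; ring
            _ = (-1 : ℂ) * 3 * (-(1 : ℂ) / 3 - (m : ℂ) * z) := by rw [hI, h33, huz]
            _ = 3 * (m : ℂ) * z + 1 := by ring
        linear_combination (ThetaK z) * hexp

lemma MEq_V (a b c d m : ℤ) (hdet : a * d - b * c = 1) (h : MEq a b c d) :
    MEq (a + 3 * m * b) b (c + 3 * m * d) d := by
  intro z hz
  have hz0 : z ≠ 0 := fun hh => by simp [hh] at hz
  have hden1 : 3 * (m : ℂ) * z + 1 ≠ 0 := by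
    intro hh
    have him : (3 * (m : ℂ) * z + 1).im = 3 * (m : ℝ) * z.im := by simp
    have hre : (3 * (m : ℂ) * z + 1).re = 3 * (m : ℝ) * z.re + 1 := by simp
    rw [hh, Complex.zero_im] at him
    rw [hh, Complex.zero_re] at hre
    have hm : (m : ℝ) = 0 := by
      rcases mul_eq_zero.mp him.symm with h1 | h2
      · rcases mul_eq_zero.mp h1 with h3 | h4
        · norm_num at h3
        · exact h4
      · exact absurd h2 hz.ne'
    rw [hm] at hre
    norm_num at hre
  have hζeq : z / (3 * (m : ℂ) * z + 1)
      = (((1 : ℤ) : ℂ) * z + ((0 : ℤ) : ℂ)) / (((3 * m : ℤ) : ℂ) * z + ((1 : ℤ) : ℂ)) := by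
    push_cast; ring
  have hζim : 0 < (z / (3 * (m : ℂ) * z + 1)).im := by
    rw [hζeq]
    refine im_mobius (by ring) hz ?_
    intro hh
    apply hden1
    rw [← hh]
    push_cast; ring
  have hboth : ¬(c = 0 ∧ d = 0) := by
    rintro ⟨rfl, rfl⟩
    simp at hdet
  have hdenζ : (c : ℂ) * (z / (3 * (m : ℂ) * z + 1)) + (d : ℂ) ≠ 0 :=
    denom_ne_zero hboth hζim
  have hboth2 : ¬(c + 3 * m * d = 0 ∧ d = 0) := by
    rintro ⟨h1, rfl⟩
    simp at hdet h1
    omega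
  have hden2 : ((c + 3 * m * d : ℤ) : ℂ) * z + (d : ℂ) ≠ 0 :=
    denom_ne_zero hboth2 hz
  have harg : (((a + 3 * m * b : ℤ) : ℂ) * z + (b : ℂ)) / (((c + 3 * m * d : ℤ) : ℂ) * z + (d : ℂ))
      = ((a : ℂ) * (z / (3 * (m : ℂ) * z + 1)) + (b : ℂ))
        / ((c : ℂ) * (z / (3 * (m : ℂ) * z + 1)) + (d : ℂ)) := by
    rw [div_eq_div_iff hden2 hdenζ]
    push_cast
    field_simp
    ring
  have h2 := h (z / (3 * (m : ℂ) * z + 1)) hζim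
  have hfact : ((c : ℂ) * (z / (3 * (m : ℂ) * z + 1)) + (d : ℂ)) * (3 * (m : ℂ) * z + 1)
      = ((c + 3 * m * d : ℤ) : ℂ) * z + (d : ℂ) := by
    rw [add_mul, mul_assoc (c : ℂ), div_mul_cancel₀ z hden1]
    push_cast
    ring
  rw [harg, h2, thetaK_Vm m hz hden1]
  linear_combination ((chi3 d : ℂ) * ThetaK z) * hfact

lemma chi3_one : chi3 1 = 1 := by decide

lemma chi3_neg_one : chi3 (-1) = -1 := by decide

lemma MEq_base (a b d : ℤ) (h : a * d = 1) : MEq a b 0 d := by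
  rcases Int.mul_eq_one_iff_eq_one_or_neg_one.mp h with ⟨rfl, rfl⟩ | ⟨rfl, rfl⟩
  · intro z hz
    have harg : (((1 : ℤ) : ℂ) * z + (b : ℂ)) / (((0 : ℤ) : ℂ) * z + ((1 : ℤ) : ℂ))
        = z + (b : ℂ) := by push_cast; ring
    rw [harg, thetaK_add_int, chi3_one]
    push_cast
    ring
  · intro z hz
    have harg : (((-1 : ℤ) : ℂ) * z + (b : ℂ)) / (((0 : ℤ) : ℂ) * z + ((-1 : ℤ) : ℂ))
        = z + ((-b : ℤ) : ℂ) := by push_cast; ring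
    rw [harg, thetaK_add_int, chi3_neg_one]
    push_cast
    ring

lemma exists_shift (x M : ℤ) (hM : M ≠ 0) :
    ∃ q r : ℤ, x = M * q + r ∧ 2 * r.natAbs ≤ M.natAbs := by
  have h0 : 0 ≤ x % M := Int.emod_nonneg x hM
  have h2 : M * (x / M) + x % M = x := Int.mul_ediv_add_emod x M
  rcases lt_or_gt_of_ne hM with hMneg | hMpos
  · have h1 : x % M < -M := by
      rw [← Int.emod_neg]
      exact Int.emod_lt_of_pos x (by omega)
    rcases le_or_gt (2 * (x % M)) (-M) with hle | hgt
    · exact ⟨x / M, x % M, by linarith, by omega⟩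
    · refine ⟨x / M - 1, x % M + M, by linear_combination -h2, by omega⟩
  · have h1 : x % M < M := Int.emod_lt_of_pos x hMpos
    rcases le_or_gt (2 * (x % M)) M with hle | hgt
    · exact ⟨x / M, x % M, by linarith, by omega⟩
    · refine ⟨x / M + 1, x % M - M, by linear_combination -h2, by omega⟩

theorem main_aux : ∀ N : ℕ, ∀ a b c d : ℤ, d.natAbs ≤ N → a * d - b * c = 1 → 3 ∣ c →
    MEq a b c d := by
  intro N
  induction N using Nat.strong_induction_on with
  | _ N IH =>
    intro a b c d hdN hdet hc
    rcases eq_or_ne c 0 with rfl | hc0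
    · exact MEq_base a b d (by simpa using hdet)
    · have hd0 : d ≠ 0 := by
        rintro rfl
        obtain ⟨c₀, rfl⟩ := hc
        have h : -3 * (b * c₀) = 1 := by linear_combination hdet
        generalize b * c₀ = t at h
        omega
      obtain ⟨m', r, hqr, hrb⟩ := exists_shift c (3 * d) (by omega)
      set m : ℤ := -m' with hm_def
      have hr : r = c + 3 * m * d := by rw [hm_def]; linear_combination -hqr
      have h3r : (3 : ℤ) ∣ r := by
        obtain ⟨c₀, rfl⟩ := hc
        exact ⟨c₀ + m * d, by linear_combination hr⟩
      have h3dAbs : (3 * d).natAbs = 3 * d.natAbs := by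
        rw [Int.natAbs_mul]
        norm_num
      rcases eq_or_ne r 0 with rfl | hr0
      · -- after the V-step the matrix is upper triangular
        have hcm : c + 3 * m * d = 0 := by omega
        have hdet2 : (a + 3 * m * b) * d = 1 := by linear_combination hdet + b * hcm
        have h1 : MEq (a + 3 * m * b) b 0 d := MEq_base _ _ _ hdet2
        have hdet3 : (a + 3 * m * b) * d - b * 0 = 1 := by linear_combination hdet2
        have h2 := MEq_V (a + 3 * m * b) b 0 d (-m) hdet3 h1
        have e1 : a + 3 * m * b + 3 * -m * b = a := by ring
        have e2 : 0 + 3 * -m * d = c := by linear_combination -hcm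
        rwa [e1, e2] at h2
      · obtain ⟨k', s, hks, hsb⟩ := exists_shift d r hr0
        set k : ℤ := -k' with hk_def
        have hs_eq : r * k + d = s := by rw [hk_def]; linear_combination hks
        have hslt : s.natAbs < N := by omega
        have hdet2 : (a + 3 * m * b) * (r * k + d) - ((a + 3 * m * b) * k + b) * r = 1 := by
          linear_combination hdet - b * hr
        have H2 : MEq (a + 3 * m * b) ((a + 3 * m * b) * k + b) r (r * k + d) := by
          refine IH s.natAbs hslt _ _ _ _ ?_ hdet2 h3r
          rw [hs_eq]
        have H3 := MEq_T (a + 3 * m * b) ((a + 3 * m * b) * k + b) r (r * k + d) (-k) h3r H2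
        have e1 : (a + 3 * m * b) * -k + ((a + 3 * m * b) * k + b) = b := by ring
        have e2 : r * -k + (r * k + d) = d := by ring
        rw [e1, e2] at H3
        have hdet4 : (a + 3 * m * b) * d - b * r = 1 := by linear_combination hdet - b * hr
        have H4 := MEq_V (a + 3 * m * b) b r d (-m) hdet4 H3
        have e3 : a + 3 * m * b + 3 * -m * b = a := by ring
        have e4 : r + 3 * -m * d = c := by linear_combination hr
        rwa [e3, e4] at H4

end ThetaKAux

/-- `Θ_K` is a modular form of weight 1 for `Γ₀(3)` with character `χ₃`:
for `(a b; c d) ∈ SL₂(ℤ)` with `3 ∣ c`,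
`Θ_K(γz) = χ₃(d)(cz + d)Θ_K(z)`. -/
theorem ThetaK_modular_weight_one (a b c d : ℤ) (hdet : a * d - b * c = 1)
    (hc : (3 : ℤ) ∣ c) (z : ℂ) (hz : 0 < z.im) :
    ThetaK (((a : ℂ) * z + (b : ℂ)) / ((c : ℂ) * z + (d : ℂ)))
      = (chi3 d : ℂ) * ((c : ℂ) * z + (d : ℂ)) * ThetaK z := by
  exact ThetaKAux.main_aux d.natAbs a b c d le_rfl hdet hc z hz
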